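/- Let f : ℝ → ℝ be a measurable function of finite total variation V = (eVariationOn f (Set.univ)).toReal over the whole line, and let λ ∈ ℝ and θ > 0. Then ∫⁻_ℝ | ∫_0^θ (f(x) − f(x − λ·τ)) dτ | dx ≤ V·|λ|·θ²/2, where the inner integral is a Lebesgue integral in τ over (0,θ) and the outer integral is a lower Lebesgue integral in x. -/

import Mathlib

open MeasureTheory

open Set in
lemma mono_shift_lintegral (W : ℝ → ℝ) (hW : Monotone W) (hW0 : ∀ x, 0 ≤ W x)
    (C : ℝ) (hWC : ∀ x, W x ≤ C) (h : ℝ) (hh : 0 ≤ h) :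
    ∫⁻ x : ℝ, ENNReal.ofReal (W x - W (x - h)) ≤ ENNReal.ofReal (C * h) := by
  have hWm : Measurable W := hW.measurable
  set g : ℝ → ENNReal := fun x => ENNReal.ofReal (W x - W (x - h)) with hg
  have hgm : Measurable g := ((hWm.sub (hWm.comp (measurable_id.sub measurable_const)))).ennreal_ofReal
  -- step A : bound on each Icc (-n) n
  have stepA : ∀ n : ℕ, ∫⁻ x in Icc (-(n:ℝ)) n, g x ≤ ENNReal.ofReal (C * h) := by
    intro n
    set a : ℝ := -(n:ℝ)
    set b : ℝ := (n:ℝ)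
    have hab : a ≤ b := by have := Nat.cast_nonneg (α:=ℝ) n; simp only [a, b]; linarith
    have hWsh : Monotone (fun x => W (x - h)) := hW.comp (fun x y hxy => by simpa using hxy)
    have hint : ∀ u v : ℝ, IntervalIntegrable W volume u v := fun u v => hW.intervalIntegrable
    have hintsh : ∀ u v : ℝ, IntervalIntegrable (fun x => W (x - h)) volume u v :=
      fun u v => hWsh.intervalIntegrable
    have hIOn : IntegrableOn (fun x => W x - W (x - h)) (Icc a b) volume := by
      apply Measure.integrableOn_of_bounded (M := C) (by simp [measure_Icc_lt_top.ne])
        ((hWm.sub (hWm.comp (measurable_id.sub measurable_const))).aestronglyMeasurable)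
      filter_upwards with x
      have h1 := hW0 (x - h); have h2 := hWC x; have h3 := hW (sub_le_self x hh)
      simp only [Pi.sub_apply, Function.comp_apply, id_eq]
      rw [Real.norm_eq_abs, abs_of_nonneg (by linarith)]
      linarith
    have hnn : (0:ℝ → ℝ) ≤ᶠ[ae (volume.restrict (Icc a b))] fun x => W x - W (x - h) := by
      filter_upwards with x
      have := hW (sub_le_self x hh); simpa using this
    rw [← ofReal_integral_eq_lintegral_ofReal hIOn hnn]
    apply ENNReal.ofReal_le_ofReal
    have e1 : ∫ x in Icc a b, (W x - W (x - h)) = ∫ x in a..b, (W x - W (x - h)) := by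
      rw [intervalIntegral.integral_of_le hab, integral_Icc_eq_integral_Ioc]
    rw [e1, intervalIntegral.integral_sub (hint a b) (hintsh a b),
      intervalIntegral.integral_comp_sub_right W h]
    have e2 : ∫ x in a..b, W x = (∫ x in a..(b-h), W x) + ∫ x in (b-h)..b, W x :=
      (intervalIntegral.integral_add_adjacent_intervals (hint _ _) (hint _ _)).symm
    have e3 : ∫ x in (a-h)..(b-h), W x = (∫ x in (a-h)..a, W x) + ∫ x in a..(b-h), W x :=
      (intervalIntegral.integral_add_adjacent_intervals (hint _ _) (hint _ _)).symm
    rw [e2, e3]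
    have e4 : ∫ x in (b-h)..b, W x ≤ C * h := by
      calc ∫ x in (b-h)..b, W x ≤ ∫ x in (b-h)..b, C :=
            intervalIntegral.integral_mono_on (by linarith) (hint _ _)
              intervalIntegrable_const (fun x _ => hWC x)
        _ = C * h := by rw [intervalIntegral.integral_const, smul_eq_mul]; ring
    have e5 : 0 ≤ ∫ x in (a-h)..a, W x :=
      intervalIntegral.integral_nonneg (by linarith) (fun x _ => hW0 x)
    linarith
  -- step B : exhaustion
  have hpt : ∀ x, g x = ⨆ n : ℕ, (Icc (-(n:ℝ)) n).indicator g x := by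
    intro x
    refine le_antisymm ?_ (iSup_le fun n => Set.indicator_le_self _ _ x)
    have hx : x ∈ Icc (-((⌈|x|⌉₊:ℕ):ℝ)) ((⌈|x|⌉₊:ℕ):ℝ) := by
      have := Nat.le_ceil |x|
      constructor <;> [nlinarith [abs_nonneg x, neg_abs_le x]; nlinarith [le_abs_self x]]
    calc g x = (Icc (-((⌈|x|⌉₊:ℕ):ℝ)) ((⌈|x|⌉₊:ℕ):ℝ)).indicator g x := by
          rw [Set.indicator_of_mem hx]
      _ ≤ ⨆ n : ℕ, (Icc (-(n:ℝ)) n).indicator g x := le_iSup (fun n : ℕ => (Icc (-(n:ℝ)) n).indicator g x) _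
  calc ∫⁻ x, g x = ∫⁻ x, ⨆ n : ℕ, (Icc (-(n:ℝ)) n).indicator g x := by
        exact lintegral_congr hpt
    _ = ⨆ n : ℕ, ∫⁻ x, (Icc (-(n:ℝ)) n).indicator g x := by
        apply lintegral_iSup (fun n => hgm.indicator measurableSet_Icc)
        intro n m hnm
        exact Set.indicator_le_indicator_of_subset
          (Icc_subset_Icc (by simp [Nat.cast_le.2 hnm]) (Nat.cast_le.2 hnm)) (fun a => zero_le)
    _ = ⨆ n : ℕ, ∫⁻ x in Icc (-(n:ℝ)) n, g x := by
        simp_rw [lintegral_indicator measurableSet_Icc]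
    _ ≤ ENNReal.ofReal (C * h) := iSup_le stepA

open Set in
lemma bv_shift_lintegral (f : ℝ → ℝ) (hmeas : Measurable f)
    (hf : eVariationOn f Set.univ ≠ ⊤) (h : ℝ) :
    ∫⁻ x : ℝ, ENNReal.ofReal |f x - f (x - h)| ≤
      eVariationOn f Set.univ * ENNReal.ofReal |h| := by
  -- first the nonnegative case
  have key : ∀ h : ℝ, 0 ≤ h → ∫⁻ x : ℝ, ENNReal.ofReal |f x - f (x - h)| ≤
      eVariationOn f Set.univ * ENNReal.ofReal h := by
    intro h hh
    have hfin : ∀ s : Set ℝ, eVariationOn f s ≠ ⊤ :=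
      fun s => ((eVariationOn.mono f (Set.subset_univ s)).trans_lt hf.lt_top).ne
    set W : ℝ → ℝ := fun x => (eVariationOn f (Iic x)).toReal with hWdef
    have hWmono : Monotone W := fun a b hab =>
      ENNReal.toReal_mono (hfin _) (eVariationOn.mono f (Iic_subset_Iic.2 hab))
    have hW0 : ∀ x, 0 ≤ W x := fun x => ENNReal.toReal_nonneg
    have hWC : ∀ x, W x ≤ (eVariationOn f Set.univ).toReal := fun x =>
      ENNReal.toReal_mono hf (eVariationOn.mono f (Set.subset_univ _))
    have hpt : ∀ x : ℝ, |f x - f (x - h)| ≤ W x - W (x - h) := by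
      intro x
      have hsub : x - h ≤ x := sub_le_self x hh
      have hu : eVariationOn f (Iic (x-h)) + eVariationOn f (Icc (x-h) x)
          = eVariationOn f (Iic x) := by
        rw [← eVariationOn.union f isGreatest_Iic (isLeast_Icc hsub),
          Set.Iic_union_Icc_eq_Iic hsub]
      have hIcc : eVariationOn f (Icc (x-h) x)
          = eVariationOn f (Iic x) - eVariationOn f (Iic (x-h)) :=
        ENNReal.eq_sub_of_add_eq (hfin _) (by rw [add_comm]; exact hu)
      have hed : edist (f x) (f (x-h)) ≤ eVariationOn f (Icc (x-h) x) :=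
        eVariationOn.edist_le f ⟨hsub, le_rfl⟩ ⟨le_rfl, hsub⟩
      have e1 : |f x - f (x - h)| = (edist (f x) (f (x-h))).toReal := by
        rw [edist_dist, ENNReal.toReal_ofReal dist_nonneg, Real.dist_eq]
      rw [e1, hWdef]
      calc (edist (f x) (f (x-h))).toReal ≤ (eVariationOn f (Icc (x-h) x)).toReal :=
            ENNReal.toReal_mono (hfin _) hed
        _ = (eVariationOn f (Iic x)).toReal - (eVariationOn f (Iic (x-h))).toReal := by
            rw [hIcc, ENNReal.toReal_sub_of_le
              (eVariationOn.mono f (Iic_subset_Iic.2 hsub)) (hfin _)]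
    calc ∫⁻ x : ℝ, ENNReal.ofReal |f x - f (x - h)|
        ≤ ∫⁻ x : ℝ, ENNReal.ofReal (W x - W (x - h)) :=
          lintegral_mono fun x => ENNReal.ofReal_le_ofReal (hpt x)
      _ ≤ ENNReal.ofReal ((eVariationOn f Set.univ).toReal * h) :=
          mono_shift_lintegral W hWmono hW0 _ hWC h hh
      _ = eVariationOn f Set.univ * ENNReal.ofReal h := by
          rw [ENNReal.ofReal_mul ENNReal.toReal_nonneg, ENNReal.ofReal_toReal hf]
  rcases le_or_gt 0 h with hh | hh
  · rw [abs_of_nonneg hh]; exact key h hh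
  · set k : ℝ := -h with hk
    have hk0 : 0 ≤ k := by linarith
    have e : ∀ x : ℝ, ENNReal.ofReal |f x - f (x - h)|
        = (fun y => ENNReal.ofReal |f y - f (y - k)|) (x + k) := by
      intro x
      simp only
      rw [show x + k - k = x by ring, show x - h = x + k by rw [hk]; ring, abs_sub_comm]
    calc ∫⁻ x : ℝ, ENNReal.ofReal |f x - f (x - h)|
        = ∫⁻ x : ℝ, (fun y => ENNReal.ofReal |f y - f (y - k)|) (x + k) :=
          lintegral_congr e
      _ = ∫⁻ y : ℝ, ENNReal.ofReal |f y - f (y - k)| :=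
          lintegral_add_right_eq_self (μ := volume) (fun y => ENNReal.ofReal |f y - f (y - k)|) k
      _ ≤ eVariationOn f Set.univ * ENNReal.ofReal k := key k hk0
      _ = eVariationOn f Set.univ * ENNReal.ofReal |h| := by
          rw [abs_of_neg hh]

open Set in
/-- Time-averaged translation estimate for a function of bounded variation:
`∫⁻_ℝ |∫_0^θ (f(x) − f(x − λτ)) dτ| dx ≤ V |λ| θ²/2`, where
`V = (eVariationOn f Set.univ).toReal`. -/
theorem time_averaged_translation_estimate_of_BV
    (f : ℝ → ℝ) (hmeas : Measurable f) (hf : eVariationOn f Set.univ ≠ ⊤)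
    (l θ : ℝ) (hθ : 0 < θ) :
    ∫⁻ x : ℝ, ENNReal.ofReal |∫ τ in Set.Ioo (0 : ℝ) θ, (f x - f (x - l * τ))| ≤
      ENNReal.ofReal ((eVariationOn f Set.univ).toReal * |l| * θ ^ 2 / 2) := by
  set V := eVariationOn f Set.univ with hV
  set F : ℝ → ℝ → ENNReal := fun x τ => ENNReal.ofReal |f x - f (x - l * τ)| with hF
  have hFm : Measurable (Function.uncurry F) := by
    apply Measurable.ennreal_ofReal
    exact ((hmeas.comp measurable_fst).sub
      (hmeas.comp (measurable_fst.sub (measurable_const.mul measurable_snd)))).abs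
  have step1 : ∀ x : ℝ, ENNReal.ofReal |∫ τ in Set.Ioo (0 : ℝ) θ, (f x - f (x - l * τ))|
      ≤ ∫⁻ τ in Set.Ioo (0 : ℝ) θ, F x τ := by
    intro x
    rw [← Real.enorm_eq_ofReal_abs]
    refine (enorm_integral_le_lintegral_enorm _).trans_eq ?_
    simp_rw [Real.enorm_eq_ofReal_abs]
    rfl
  have swap : ∫⁻ x : ℝ, ∫⁻ τ in Set.Ioo (0 : ℝ) θ, F x τ
      = ∫⁻ τ in Set.Ioo (0 : ℝ) θ, ∫⁻ x : ℝ, F x τ :=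
    lintegral_lintegral_swap hFm.aemeasurable
  have inner_bound : ∀ τ ∈ Set.Ioo (0 : ℝ) θ,
      ∫⁻ x : ℝ, F x τ ≤ (V * ENNReal.ofReal |l|) * ENNReal.ofReal τ := by
    intro τ hτ
    calc ∫⁻ x : ℝ, F x τ ≤ V * ENNReal.ofReal |l * τ| :=
          bv_shift_lintegral f hmeas hf (l * τ)
      _ = (V * ENNReal.ofReal |l|) * ENNReal.ofReal τ := by
          rw [abs_mul, abs_of_pos hτ.1, ENNReal.ofReal_mul (abs_nonneg l), mul_assoc]
  have compute : ∫⁻ τ in Set.Ioo (0 : ℝ) θ, ENNReal.ofReal τ = ENNReal.ofReal (θ^2/2) := by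
    have hInt : IntegrableOn (fun τ : ℝ => τ) (Set.Ioo 0 θ) volume := by
      apply Measure.integrableOn_of_bounded (M := θ) (by simp [measure_Ioo_lt_top.ne])
        measurable_id.aestronglyMeasurable
      filter_upwards [ae_restrict_mem measurableSet_Ioo] with τ hτ
      simp only [id_eq, Real.norm_eq_abs]; rw [abs_of_pos hτ.1]; exact hτ.2.le
    have hnn : (0:ℝ → ℝ) ≤ᶠ[ae (volume.restrict (Set.Ioo 0 θ))] fun τ => τ := by
      filter_upwards [ae_restrict_mem measurableSet_Ioo] with τ hτ using hτ.1.le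
    rw [← ofReal_integral_eq_lintegral_ofReal hInt hnn]
    congr 1
    rw [← integral_Ioc_eq_integral_Ioo, ← intervalIntegral.integral_of_le hθ.le,
      integral_id]
    ring
  calc ∫⁻ x : ℝ, ENNReal.ofReal |∫ τ in Set.Ioo (0 : ℝ) θ, (f x - f (x - l * τ))|
      ≤ ∫⁻ x : ℝ, ∫⁻ τ in Set.Ioo (0 : ℝ) θ, F x τ := lintegral_mono step1
    _ = ∫⁻ τ in Set.Ioo (0 : ℝ) θ, ∫⁻ x : ℝ, F x τ := swap
    _ ≤ ∫⁻ τ in Set.Ioo (0 : ℝ) θ, (V * ENNReal.ofReal |l|) * ENNReal.ofReal τ := by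
        apply setLIntegral_mono_ae (by fun_prop)
        filter_upwards with τ hτ using inner_bound τ hτ
    _ = (V * ENNReal.ofReal |l|) * ∫⁻ τ in Set.Ioo (0 : ℝ) θ, ENNReal.ofReal τ := by
        rw [lintegral_const_mul _ (by fun_prop)]
    _ = (V * ENNReal.ofReal |l|) * ENNReal.ofReal (θ^2/2) := by rw [compute]
    _ = ENNReal.ofReal (V.toReal * |l| * θ ^ 2 / 2) := by
        rw [show V.toReal * |l| * θ ^ 2 / 2 = (V.toReal * |l|) * (θ^2/2) by ring,
          ENNReal.ofReal_mul (mul_nonneg ENNReal.toReal_nonneg (abs_nonneg l)),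
          ENNReal.ofReal_mul ENNReal.toReal_nonneg, ENNReal.ofReal_toReal hf]
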